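/- Let Y be a nonempty finite set and let P : Y × Y → ℝ be a preference model satisfying the linearity condition P(y₁, y₂) = 1 − P(y₂, y₁) for all y₁, y₂ ∈ Y. Then there exists a mixed policy μ* (a probability distribution on Y) such that for every mixed policy ν on Y, the extended preference satisfies P̄(μ*, ν) = Σ_{y₁,y₂} μ*(y₁) ν(y₂) P(y₁, y₂) ≥ 1/2; i.e., μ* is weakly preferred to every policy. -/

import Mathlib

/-- A mixed policy on a finite set `Y`: a probability distribution on `Y`. -/
def IsMixed {Y : Type*} [Fintype Y] (μ : Y → ℝ) : Prop :=
  (∀ y, 0 ≤ μ y) ∧ ∑ y, μ y = 1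

/-- The extended preference of policy `μ` over policy `ν` for a preference model `P`. -/
def extPref {Y : Type*} [Fintype Y] (P : Y → Y → ℝ) (μ ν : Y → ℝ) : ℝ :=
  ∑ y₁, ∑ y₂, μ y₁ * ν y₂ * P y₁ y₂

/-- A double sum against a skew-symmetric kernel vanishes. -/
lemma skew_double_sum_eq_zero {Y : Type*} [Fintype Y]
    (M : Y → Y → ℝ) (hM : ∀ i j, M i j = - M j i) (a : Y → ℝ) :
    ∑ j, ∑ i, M j i * a i * a j = 0 := by
  have key : ∑ j, ∑ i, M j i * a i * a j = - ∑ j, ∑ i, M j i * a i * a j :=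
    calc ∑ j, ∑ i, M j i * a i * a j
        = ∑ x, ∑ y, M y x * a x * a y := Finset.sum_comm
      _ = ∑ x, ∑ y, -(M x y * a y * a x) :=
          Finset.sum_congr rfl fun x _ => Finset.sum_congr rfl fun y _ => by
            rw [hM y x]; ring
      _ = - ∑ x, ∑ y, M x y * a y * a x := by
          simp only [Finset.sum_neg_distrib]
  linarith

/-- Key lemma: for a skew-symmetric matrix `M`, some point of the standard simplex
is mapped by `μ ↦ M μ` into the nonpositive orthant. -/
lemma exists_simplex_skew {Y : Type*} [Fintype Y] [Nonempty Y]
    (M : Y → Y → ℝ) (hM : ∀ i j, M i j = - M j i) :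
    ∃ μ ∈ stdSimplex ℝ Y, ∀ j, ∑ i, M j i * μ i ≤ 0 := by
  classical
  by_contra hcon
  push_neg at hcon
  -- the linear map μ ↦ M μ
  let L : (Y → ℝ) →ₗ[ℝ] (Y → ℝ) :=
    { toFun := fun μ j => ∑ i, M j i * μ i
      map_add' := by
        intro a b; funext j; simp [mul_add, Finset.sum_add_distrib]
      map_smul' := by
        intro c a; funext j
        simp [Finset.mul_sum, mul_comm, mul_left_comm] }
  have hLcont : Continuous L := L.continuous_of_finiteDimensional
  set S : Set (Y → ℝ) := L '' (stdSimplex ℝ Y) with hS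
  set T : Set (Y → ℝ) := {x | ∀ j, x j ≤ 0} with hT
  have hTeq : T = Set.pi Set.univ (fun _ => Set.Iic (0:ℝ)) := by
    ext x; simp [hT, Set.mem_pi, Pi.le_def]
  have hScompact : IsCompact S := (isCompact_stdSimplex ℝ Y).image hLcont
  have hSconvex : Convex ℝ S := (convex_stdSimplex ℝ Y).linear_image L
  have hTclosed : IsClosed T := by
    rw [hTeq]; exact isClosed_set_pi fun _ _ => isClosed_Iic
  have hTconvex : Convex ℝ T := by
    rw [hTeq]; exact convex_pi fun _ _ => convex_Iic 0
  have hdisj : Disjoint S T := by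
    rw [Set.disjoint_left]
    rintro x ⟨μ, hμ, rfl⟩ hx
    obtain ⟨j, hj⟩ := hcon μ hμ
    exact absurd (hx j) (not_le.2 hj)
  obtain ⟨f, u, v, hfu, huv, hfv⟩ :=
    geometric_hahn_banach_compact_closed hSconvex hScompact hTconvex hTclosed hdisj
  -- v < 0 since 0 ∈ T
  have hv0 : v < 0 := by simpa using hfv 0 (fun j => le_refl 0)
  -- f is nonnegative on T (since T is a cone and f is bounded below on T)
  have hfT : ∀ b ∈ T, 0 ≤ f b := by
    intro b hb
    by_contra hneg
    push_neg at hneg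
    have ht : (0:ℝ) < v / f b := div_pos_of_neg_of_neg hv0 hneg
    have hbt : (v / f b) • b ∈ T := fun j =>
      mul_nonpos_of_nonneg_of_nonpos ht.le (hb j)
    have h := hfv _ hbt
    rw [map_smul, smul_eq_mul, div_mul_cancel₀ v (ne_of_lt hneg)] at h
    exact lt_irrefl v h
  -- the vector q
  set q : Y → ℝ := fun j => - f (Pi.single j 1) with hq
  have hq0 : ∀ j, 0 ≤ q j := by
    intro j
    have hmem : (-(Pi.single j 1) : Y → ℝ) ∈ T := by
      intro k
      simp only [Pi.neg_apply, neg_nonpos]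
      by_cases h : k = j <;> simp [h, Pi.single_apply]
    have := hfT _ hmem
    simpa [hq] using this
  -- f x = -∑ j, x j * q j
  have hfx : ∀ x : Y → ℝ, f x = -∑ j, x j * q j := by
    intro x
    have hx : x = ∑ j, x j • (Pi.single j 1 : Y → ℝ) := by
      funext k
      simp [Finset.sum_apply, Pi.single_apply, mul_comm]
    conv_lhs => rw [hx]
    rw [map_sum]
    simp [hq, mul_comm]
  -- for every μ in the simplex, ∑ j, (L μ) j * q j > 0
  have hpos : ∀ μ ∈ stdSimplex ℝ Y, 0 < ∑ j, (L μ) j * q j := by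
    intro μ hμ
    have h1 : f (L μ) < u := hfu _ ⟨μ, hμ, rfl⟩
    have h2 : f (L μ) < 0 := lt_trans h1 (lt_trans huv hv0)
    rw [hfx] at h2
    linarith
  -- q is not zero: use some point of the simplex
  obtain ⟨y0⟩ := ‹Nonempty Y›
  have hy0 : (Pi.single y0 1 : Y → ℝ) ∈ stdSimplex ℝ Y := by
    constructor
    · intro k; by_cases h : k = y0 <;> simp [h, Pi.single_apply]
    · simp [Pi.single_apply]
  have hqs : 0 < ∑ j, q j := by
    rcases (Finset.sum_nonneg (fun j _ => hq0 j)).lt_or_eq with h | h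
    · exact h
    · exfalso
      have hallzero : ∀ j, q j = 0 := fun j =>
        (Finset.sum_eq_zero_iff_of_nonneg (fun j _ => hq0 j)).1 h.symm j
          (Finset.mem_univ j)
      have := hpos _ hy0
      simp [hallzero] at this
  -- normalize q and plug it into hpos
  set s := ∑ j, q j with hs'
  have hμq : (fun j => q j / s) ∈ stdSimplex ℝ Y := by
    constructor
    · intro j; exact div_nonneg (hq0 j) hqs.le
    · rw [← Finset.sum_div, ← hs', div_self (ne_of_gt hqs)]
  have hfin : 0 < ∑ j, (L (fun j => q j / s)) j * q j := hpos _ hμq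
  -- but this sum is zero by skew-symmetry
  have hzero : ∑ j, (L (fun j => q j / s)) j * q j = 0 := by
    have hrw : ∀ j, (L (fun j => q j / s)) j * q j
        = (1/s) * ∑ i, M j i * q i * q j := by
      intro j
      show (∑ i, M j i * (q i / s)) * q j = _
      rw [Finset.mul_sum, Finset.sum_mul]
      refine Finset.sum_congr rfl fun i _ => ?_
      rw [div_eq_mul_inv, one_div]
      ring
    simp_rw [hrw]
    rw [← Finset.mul_sum, skew_double_sum_eq_zero M hM q, mul_zero]
  linarith

/-- Existence part of Theorem 1: for a preference model satisfying the linearity condition,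
there exists a mixed policy weakly preferred to every mixed policy. -/
theorem exists_maximin_policy {Y : Type*} [Fintype Y] [Nonempty Y]
    (P : Y → Y → ℝ) (hP : ∀ y₁ y₂, P y₁ y₂ = 1 - P y₂ y₁) :
    ∃ μstar : Y → ℝ, IsMixed μstar ∧
      ∀ ν : Y → ℝ, IsMixed ν → (1 : ℝ) / 2 ≤ extPref P μstar ν := by
  classical
  set M : Y → Y → ℝ := fun i j => P i j - 1/2 with hM'
  have hskew : ∀ i j, M i j = - M j i := by
    intro i j; simp only [hM']; rw [hP i j]; ring
  obtain ⟨μ, hμ, hμle⟩ := exists_simplex_skew M hskew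
  refine ⟨μ, ⟨hμ.1, hμ.2⟩, ?_⟩
  intro ν hν
  -- for each j, ∑ i, μ i * P i j ≥ 1/2
  have hcol : ∀ j, (1:ℝ)/2 ≤ ∑ i, μ i * P i j := by
    intro j
    have h := hμle j
    have hsum : ∑ i, M j i * μ i = (∑ i, μ i * P j i) - 1/2 := by
      simp only [hM', sub_mul]
      rw [Finset.sum_sub_distrib]
      congr 1
      · exact Finset.sum_congr rfl fun i _ => mul_comm _ _
      · rw [← Finset.mul_sum, hμ.2, mul_one]
    -- so ∑ i, μ i * P j i ≤ 1/2
    have h1 : ∑ i, μ i * P j i ≤ 1/2 := by linarith [hsum ▸ h]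
    -- use linearity to flip
    have h2 : ∑ i, μ i * P i j = 1 - ∑ i, μ i * P j i := by
      have : ∀ i, μ i * P i j = μ i - μ i * P j i := by
        intro i; rw [hP i j]; ring
      simp_rw [this]
      rw [Finset.sum_sub_distrib, hμ.2]
    linarith
  -- conclude
  have : extPref P μ ν = ∑ y₂, ν y₂ * ∑ y₁, μ y₁ * P y₁ y₂ := by
    unfold extPref
    rw [Finset.sum_comm]
    refine Finset.sum_congr rfl fun y₂ _ => ?_
    rw [Finset.mul_sum]
    exact Finset.sum_congr rfl fun y₁ _ => by ring
  rw [this]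
  calc (1:ℝ)/2 = ∑ y₂, ν y₂ * (1/2) := by
        rw [← Finset.sum_mul, hν.2, one_mul]
    _ ≤ ∑ y₂, ν y₂ * ∑ y₁, μ y₁ * P y₁ y₂ :=
        Finset.sum_le_sum fun y₂ _ =>
          mul_le_mul_of_nonneg_left (hcol y₂) (hν.1 y₂)
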